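/- arXiv:math/0311205 — 3 statements merged into one kernel-verified Lean document; each statement's English description precedes it below -/
import Mathlib

section
/- For all integers j ≥ 1 and r ≥ 1, the convoluted convolved Fibonacci number G_j^{(r)} and the sign twisted convoluted convolved Fibonacci number H_j^{(r)} are non-negative integers; moreover, if j ≥ 2 then G_j^{(r)} ≥ 1 and H_j^{(r)} ≥ 1. -/
open PowerSeries Finset

variable {R : Type*} [CommSemiring R]

/-- The "expand by p" (substitute `X ↦ X^p`) operation on power series. -/
noncomputable def pexpand (p : ℕ) (hp : p ≠ 0) : PowerSeries R →+* PowerSeries R where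
  toFun f := PowerSeries.mk fun n => if p ∣ n then coeff (n / p) f else 0
  map_zero' := by ext n; simp
  map_one' := by
    ext n
    simp only [coeff_mk, coeff_one]
    rcases eq_or_ne n 0 with rfl | hn
    · simp
    · rw [if_neg hn]
      split_ifs with h1 h2
      · exfalso
        obtain ⟨c, rfl⟩ := h1
        rw [Nat.mul_div_cancel_left _ (Nat.pos_of_ne_zero hp)] at h2
        exact hn (by rw [h2, mul_zero])
      · rfl
      · rfl
  map_add' f g := by ext n; simp only [coeff_mk, map_add]; split_ifs <;> simp
  map_mul' f g := by
    ext n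
    simp only [coeff_mk, coeff_mul]
    by_cases hn : p ∣ n
    · obtain ⟨n', rfl⟩ := hn
      rw [if_pos ⟨n', rfl⟩]
      rw [Nat.mul_div_cancel_left _ (Nat.pos_of_ne_zero hp)]
      rw [← Finset.sum_filter_of_ne (s := Finset.HasAntidiagonal.antidiagonal (p * n'))
        (p := fun q => p ∣ q.1 ∧ p ∣ q.2) (f := fun q =>
          (if p ∣ q.1 then coeff (q.1 / p) f else 0) * (if p ∣ q.2 then coeff (q.2 / p) g else 0))
        (by
          intro x hx hne
          constructor
          · by_contra h; rw [if_neg h, zero_mul] at hne; exact hne rfl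
          · by_contra h; rw [if_neg h, mul_zero] at hne; exact hne rfl)]
      refine (Finset.sum_nbij' (fun q => (q.1 / p, q.2 / p)) (fun q => (p * q.1, p * q.2))
        ?_ ?_ ?_ ?_ ?_).symm
      · rintro ⟨a, b⟩ hab
        simp only [Finset.mem_filter, Finset.HasAntidiagonal.mem_antidiagonal] at hab ⊢
        obtain ⟨hab, ⟨x, rfl⟩, ⟨y, rfl⟩⟩ := hab
        simp only [Nat.mul_div_cancel_left _ (Nat.pos_of_ne_zero hp)]
        exact Nat.eq_of_mul_eq_mul_left (Nat.pos_of_ne_zero hp) (by rw [Nat.mul_add, hab])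
      · rintro ⟨a, b⟩ hab
        simp only [Finset.HasAntidiagonal.mem_antidiagonal] at hab
        simp only [Finset.mem_filter, Finset.HasAntidiagonal.mem_antidiagonal]
        exact ⟨by rw [← Nat.mul_add, hab], ⟨a, rfl⟩, ⟨b, rfl⟩⟩
      · rintro ⟨a, b⟩ hab
        simp only [Finset.mem_filter, Finset.HasAntidiagonal.mem_antidiagonal] at hab
        obtain ⟨-, ⟨x, rfl⟩, ⟨y, rfl⟩⟩ := hab
        simp [Nat.mul_div_cancel_left _ (Nat.pos_of_ne_zero hp)]
      · rintro ⟨a, b⟩ hab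
        simp [Nat.mul_div_cancel_left _ (Nat.pos_of_ne_zero hp)]
      · rintro ⟨a, b⟩ hab
        simp only [Finset.mem_filter, Finset.HasAntidiagonal.mem_antidiagonal] at hab
        obtain ⟨-, ⟨x, rfl⟩, ⟨y, rfl⟩⟩ := hab
        simp only
        rw [if_pos ⟨x, rfl⟩, if_pos ⟨y, rfl⟩,
          Nat.mul_div_cancel_left _ (Nat.pos_of_ne_zero hp),
          Nat.mul_div_cancel_left _ (Nat.pos_of_ne_zero hp)]
    · rw [if_neg hn]
      refine (Finset.sum_eq_zero ?_).symm
      rintro ⟨a, b⟩ hab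
      simp only [Finset.HasAntidiagonal.mem_antidiagonal] at hab
      simp only
      by_cases ha : p ∣ a
      · have hb : ¬ p ∣ b := fun hb => hn (hab ▸ Nat.dvd_add ha hb)
        rw [if_neg hb, mul_zero]
      · rw [if_neg ha, zero_mul]

theorem coeff_pexpand (p : ℕ) (hp : p ≠ 0) (f : PowerSeries R) (n : ℕ) :
    coeff n (pexpand p hp f) = if p ∣ n then coeff (n / p) f else 0 := by
  have : (pexpand p hp f) = PowerSeries.mk fun n => if p ∣ n then coeff (n / p) f else 0 := rfl
  rw [this, coeff_mk]

theorem pexpand_X (p : ℕ) (hp : p ≠ 0) : pexpand p hp (X : PowerSeries R) = X ^ p := by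
  ext n
  rw [coeff_pexpand, coeff_X_pow]
  by_cases h1 : p ∣ n
  · rw [if_pos h1, coeff_X]
    obtain ⟨c, rfl⟩ := h1
    rw [Nat.mul_div_cancel_left _ (Nat.pos_of_ne_zero hp)]
    by_cases hc : c = 1
    · subst hc; rw [if_pos rfl, if_pos (mul_one p)]
    · rw [if_neg hc, if_neg (by intro h; exact hc (Nat.eq_of_mul_eq_mul_left
        (Nat.pos_of_ne_zero hp) (by rw [h, mul_one])))]
  · rw [if_neg h1, if_neg (by rintro rfl; exact h1 (dvd_refl _))]

theorem pexpand_map {S : Type*} [CommSemiring S] (p : ℕ) (hp : p ≠ 0) (φ : R →+* S)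
    (f : PowerSeries R) : map φ (pexpand p hp f) = pexpand p hp (map φ f) := by
  ext n
  rw [coeff_map, coeff_pexpand, coeff_pexpand]
  split_ifs
  · rw [coeff_map]
  · exact map_zero φ

variable {R : Type*} [CommSemiring R]

theorem coeff_mk_pow (f : ℕ → R) (k n : ℕ) :
    coeff n ((PowerSeries.mk f) ^ k) = ∑ t ∈ Finset.Nat.antidiagonalTuple k n, ∏ i, f (t i) := by
  induction k generalizing n with
  | zero =>
    rw [pow_zero, coeff_one]
    cases n with
    | zero => simp
    | succ n => simp
  | succ k ih =>
    rw [pow_succ', coeff_mul]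
    simp only [coeff_mk, ih, Finset.mul_sum]
    rw [Finset.sum_sigma']
    refine Finset.sum_nbij' (fun x => Fin.cons x.1.1 x.2)
      (fun t => ⟨(t 0, ∑ i, Fin.tail t i), Fin.tail t⟩) ?_ ?_ ?_ ?_ ?_
    · rintro ⟨⟨a, b⟩, t⟩ h
      simp only [Finset.mem_sigma, Finset.HasAntidiagonal.mem_antidiagonal,
        Finset.Nat.mem_antidiagonalTuple] at h ⊢
      rw [Fin.sum_cons, h.2, h.1]
    · rintro t h
      simp only [Finset.Nat.mem_antidiagonalTuple] at h
      simp only [Finset.mem_sigma, Finset.HasAntidiagonal.mem_antidiagonal, Finset.Nat.mem_antidiagonalTuple]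
      refine ⟨?_, by simp⟩
      rw [← h, Fin.sum_univ_succ]
      rfl
    · rintro ⟨⟨a, b⟩, t⟩ h
      simp only [Finset.mem_sigma, Finset.HasAntidiagonal.mem_antidiagonal,
        Finset.Nat.mem_antidiagonalTuple] at h
      simp only [Fin.cons_zero, Fin.tail_cons]
      congr 1
      rw [h.2]
    · rintro t h
      simp only
      exact Fin.cons_self_tail t
    · rintro ⟨⟨a, b⟩, t⟩ h
      simp only [Fin.prod_univ_succ, Fin.cons_zero, Fin.cons_succ]

/-! ### The Fibonacci power series over ℤ and the Frobenius congruence -/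

/-- The generating function of `fib (n+1)` over a commutative semiring. -/
noncomputable def fibPS (R : Type*) [CommSemiring R] : PowerSeries R :=
  PowerSeries.mk fun n => (Nat.fib (n + 1) : R)

theorem fibPS_mul_eq_one (R : Type*) [CommRing R] :
    ((1 : PowerSeries R) - X - X ^ 2) * fibPS R = 1 := by
  have : ((1 : PowerSeries R) - X - X ^ 2) * fibPS R
      = fibPS R - X * fibPS R - X ^ 2 * fibPS R := by ring
  rw [this]
  ext n
  simp only [map_sub]
  match n with
  | 0 =>
    simp [fibPS]
  | 1 =>
    rw [show (1 : ℕ) = 0 + 1 from rfl, coeff_succ_X_mul]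
    rw [coeff_one]
    have h2 : coeff 1 (X ^ 2 * fibPS R) = 0 := by
      rw [show X ^ 2 * fibPS R = X * (X * fibPS R) by ring,
        show (1 : ℕ) = 0 + 1 from rfl, coeff_succ_X_mul, coeff_zero_eq_constantCoeff]
      simp
    rw [h2]
    simp [fibPS, coeff_mk]
  | (n + 2) =>
    rw [show n + 2 = (n + 1) + 1 from rfl, coeff_succ_X_mul,
      show n + 1 + 1 = n + 2 from rfl, coeff_X_pow_mul (fibPS R) 2 n, coeff_one]
    simp only [fibPS, coeff_mk]
    rw [if_neg (by omega)]
    have : Nat.fib (n + 2 + 1) = Nat.fib (n + 1) + Nat.fib (n + 1 + 1) := Nat.fib_add_two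
    rw [this]
    push_cast
    ring

theorem map_fibPS (p : ℕ) [NeZero p] :
    map (Int.castRingHom (ZMod p)) (fibPS ℤ) = fibPS (ZMod p) := by
  ext n
  simp [fibPS, coeff_map]

/-- Frobenius congruence for the Fibonacci power series. -/
theorem fib_frobenius (p : ℕ) (hp : p.Prime) :
    ((p : ℕ) : PowerSeries ℤ) ∣ fibPS ℤ ^ p - pexpand p hp.ne_zero (fibPS ℤ) := by
  haveI : Fact p.Prime := ⟨hp⟩
  haveI : CharP (PowerSeries (ZMod p)) p := by
    constructor
    intro n
    rw [← map_natCast (C : ZMod p →+* PowerSeries (ZMod p)) n]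
    constructor
    · intro h
      have h2 : ((n : ZMod p)) = 0 := by simpa using congrArg (constantCoeff (R := ZMod p)) h
      exact (CharP.cast_eq_zero_iff (ZMod p) p n).mp h2
    · intro h
      rw [(CharP.cast_eq_zero_iff (ZMod p) p n).mpr h, map_zero]
  set φ := Int.castRingHom (ZMod p)
  -- it suffices that the image under `map φ` vanishes
  have key : map φ (fibPS ℤ ^ p - pexpand p hp.ne_zero (fibPS ℤ)) = 0 := by
    rw [map_sub, map_pow, pexpand_map, map_fibPS]
    set F := fibPS (ZMod p)
    set u : PowerSeries (ZMod p) := 1 - X - X ^ 2 with hu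
    have huF : u * F = 1 := fibPS_mul_eq_one (ZMod p)
    have hup : u ^ p = 1 - X ^ p - (X ^ p) ^ 2 := by
      have h1 : u = 1 - (X + X ^ 2) := by rw [hu]; ring
      rw [h1, sub_pow_char, one_pow, add_pow_char, pow_right_comm]
      ring
    have hupe : pexpand p hp.ne_zero u = 1 - X ^ p - (X ^ p) ^ 2 := by
      rw [hu, map_sub, map_sub, map_one, map_pow, pexpand_X]
    have h2 : u ^ p * F ^ p = 1 := by rw [← mul_pow, huF, one_pow]
    have h3 : pexpand p hp.ne_zero u * pexpand p hp.ne_zero F = 1 := by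
      rw [← map_mul, huF, map_one]
    have : F ^ p = pexpand p hp.ne_zero F := by
      calc F ^ p = F ^ p * (pexpand p hp.ne_zero u * pexpand p hp.ne_zero F) := by
            rw [h3, mul_one]
        _ = (u ^ p * F ^ p) * pexpand p hp.ne_zero F := by rw [hupe, ← hup]; ring
        _ = pexpand p hp.ne_zero F := by rw [h2, one_mul]
    rw [this, sub_self]
  -- now deduce divisibility over ℤ
  refine ⟨PowerSeries.mk fun n =>
    coeff n (fibPS ℤ ^ p - pexpand p hp.ne_zero (fibPS ℤ)) / p, ?_⟩
  ext n
  have hdvd : (p : ℤ) ∣ coeff n (fibPS ℤ ^ p - pexpand p hp.ne_zero (fibPS ℤ)) := by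
    rw [← ZMod.intCast_zmod_eq_zero_iff_dvd]
    have : ((coeff n (fibPS ℤ ^ p - pexpand p hp.ne_zero (fibPS ℤ)) : ℤ) : ZMod p)
        = coeff n (map φ (fibPS ℤ ^ p - pexpand p hp.ne_zero (fibPS ℤ))) := by
      rw [coeff_map]; rfl
    rw [this, key, map_zero]
  have hC : ((p : ℕ) : PowerSeries ℤ) = C ((p : ℕ) : ℤ) := by
    rw [map_natCast (C : ℤ →+* PowerSeries ℤ) p]
  rw [hC, coeff_C_mul, coeff_mk, Int.mul_ediv_cancel' hdvd]

/-! ### The Gauss congruence / divisibility -/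

theorem cng (φ : PowerSeries ℤ)
    (hφ : ∀ p : ℕ, (hp : p.Prime) → ((p : ℕ) : PowerSeries ℤ) ∣ φ ^ p - pexpand p hp.ne_zero φ)
    {p : ℕ} (hp : p.Prime) (a s n : ℕ) (ha : 1 ≤ a) :
    ((p : ℤ) ^ a) ∣ coeff n (φ ^ (p ^ a * s)) -
      (if p ∣ n then coeff (n / p) (φ ^ (p ^ (a - 1) * s)) else 0) := by
  set E := pexpand p hp.ne_zero φ with hE
  have h1 : ((p : ℕ) : PowerSeries ℤ) ^ a ∣ (φ ^ p) ^ p ^ (a - 1) - E ^ p ^ (a - 1) := by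
    have := dvd_sub_pow_of_dvd_sub (hφ p hp) (a - 1)
    rwa [Nat.sub_add_cancel ha] at this
  have h3 : ((p : ℕ) : PowerSeries ℤ) ^ a ∣ φ ^ (p ^ a * s) - E ^ (p ^ (a - 1) * s) := by
    have h2 := sub_dvd_pow_sub_pow ((φ ^ p) ^ p ^ (a - 1)) (E ^ p ^ (a - 1)) s
    have h4 : ((φ ^ p) ^ p ^ (a - 1)) ^ s = φ ^ (p ^ a * s) := by
      rw [← pow_mul, ← pow_mul, ← mul_assoc]
      congr 2
      rw [← pow_succ', Nat.sub_add_cancel ha]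
    have h5 : (E ^ p ^ (a - 1)) ^ s = E ^ (p ^ (a - 1) * s) := by rw [← pow_mul]
    rw [h4, h5] at h2
    exact dvd_trans h1 h2
  obtain ⟨h, hh⟩ := h3
  have hcoeff : coeff n (φ ^ (p ^ a * s)) - coeff n (E ^ (p ^ (a - 1) * s))
      = (p : ℤ) ^ a * coeff n h := by
    have h6 := congrArg (coeff n) hh
    rw [map_sub] at h6
    rw [h6]
    have hC : ((p : ℕ) : PowerSeries ℤ) ^ a = C ((p : ℤ) ^ a) := by
      rw [map_pow, map_natCast (C : ℤ →+* PowerSeries ℤ) p]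
    rw [hC, coeff_C_mul]
  have hEco : coeff n (E ^ (p ^ (a - 1) * s))
      = if p ∣ n then coeff (n / p) (φ ^ (p ^ (a - 1) * s)) else 0 := by
    rw [hE, ← map_pow, coeff_pexpand]
  rw [← hEco]
  exact ⟨coeff n h, hcoeff⟩

theorem gauss (φ : PowerSeries ℤ)
    (hφ : ∀ p : ℕ, (hp : p.Prime) → ((p : ℕ) : PowerSeries ℤ) ∣ φ ^ p - pexpand p hp.ne_zero φ)
    (r m : ℕ) (hr : 0 < r) :
    ((r : ℕ) : ℤ) ∣ ∑ d ∈ (Nat.gcd r m).divisors,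
      (ArithmeticFunction.moebius d : ℤ) * coeff (m / d) (φ ^ (r / d)) := by
  set g := Nat.gcd r m with hgdef
  set S : ℤ := ∑ d ∈ g.divisors,
    (ArithmeticFunction.moebius d : ℤ) * coeff (m / d) (φ ^ (r / d)) with hS
  have hgr : g ∣ r := Nat.gcd_dvd_left r m
  have hgm : g ∣ m := Nat.gcd_dvd_right r m
  have hg0 : g ≠ 0 := Nat.gcd_ne_zero_left hr.ne'
  suffices hpp : ∀ p k : ℕ, p.Prime → p ^ k ∣ r → ((p : ℤ)) ^ k ∣ S by
    have h1 : r ∣ S.natAbs := by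
      rw [Nat.dvd_iff_prime_pow_dvd_dvd]
      intro p k hp hpk
      have h2 : ((p ^ k : ℕ) : ℤ) ∣ S := by push_cast; exact hpp p k hp hpk
      have h3 := Int.natAbs_dvd_natAbs.mpr h2
      rwa [Int.natAbs_natCast] at h3
    exact Int.natAbs_dvd_natAbs.mp (by rwa [Int.natAbs_natCast] : ((r:ℤ)).natAbs ∣ S.natAbs)
  intro p k hp hpk
  rcases Nat.eq_zero_or_pos k with rfl | hk
  · simp
  have hpr : p ∣ r := dvd_trans (dvd_pow_self p hk.ne') hpk
  set a := r.factorization p with hadef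
  have ha : 1 ≤ a := hp.factorization_pos_of_dvd hr.ne' hpr
  have hka : k ≤ a := (Nat.Prime.pow_dvd_iff_le_factorization hp hr.ne').mp hpk
  suffices hSa : ((p : ℤ)) ^ a ∣ S from dvd_trans (pow_dvd_pow _ hka) hSa
  set s := r / p ^ a with hsdef
  have hrs : p ^ a * s = r := Nat.ordProj_mul_ordCompl_eq_self r p
  have hps : ¬ p ∣ s := Nat.not_dvd_ordCompl hp hr.ne'
  have hpa : 0 < p := hp.pos
  rw [hS, ← Finset.sum_filter_add_sum_filter_not g.divisors (fun d => p ∣ d)]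
  set T := g.divisors.filter (fun d => ¬ p ∣ d) with hT
  have hTmem : ∀ d ∈ T, d ∣ g ∧ ¬ p ∣ d := by
    intro d hd
    rw [hT, Finset.mem_filter, Nat.mem_divisors] at hd
    exact ⟨hd.1.1, hd.2⟩
  have hA : ∑ d ∈ g.divisors.filter (fun d => p ∣ d),
        (ArithmeticFunction.moebius d : ℤ) * coeff (m / d) (φ ^ (r / d))
      = ∑ d ∈ T, (if p ∣ m / d then
          -(ArithmeticFunction.moebius d : ℤ) * coeff (m / (p * d)) (φ ^ (r / (p * d)))
          else 0) := by
    by_cases hpg : p ∣ g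
    · have hgp0 : g / p ≠ 0 := by
        intro h0
        exact hg0 (by rw [← Nat.div_mul_cancel hpg, h0, zero_mul])
      have h1 : ∑ d ∈ g.divisors.filter (fun d => p ∣ d),
            (ArithmeticFunction.moebius d : ℤ) * coeff (m / d) (φ ^ (r / d))
          = ∑ e ∈ (g / p).divisors,
            (ArithmeticFunction.moebius (p * e) : ℤ) * coeff (m / (p * e)) (φ ^ (r / (p * e))) := by
        refine Finset.sum_nbij' (fun d => d / p) (fun e => p * e) ?_ ?_ ?_ ?_ ?_
        · intro d hd
          rw [Finset.mem_filter, Nat.mem_divisors] at hd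
          obtain ⟨⟨hdg, -⟩, hpd⟩ := hd
          rw [Nat.mem_divisors]
          refine ⟨?_, hgp0⟩
          obtain ⟨d', rfl⟩ := hpd
          show p * d' / p ∣ g / p
          rw [Nat.mul_div_cancel_left _ hpa]
          refine (Nat.mul_dvd_mul_iff_left hpa).mp ?_
          rw [Nat.mul_div_cancel' hpg]
          exact hdg
        · intro e he
          rw [Nat.mem_divisors] at he
          rw [Finset.mem_filter, Nat.mem_divisors]
          exact ⟨⟨dvd_trans (mul_dvd_mul_left p he.1) (by rw [Nat.mul_div_cancel' hpg]), hg0⟩,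
            Dvd.intro e rfl⟩
        · intro d hd
          rw [Finset.mem_filter] at hd
          exact Nat.mul_div_cancel' hd.2
        · intro e he
          exact Nat.mul_div_cancel_left _ hpa
        · intro d hd
          rw [Finset.mem_filter] at hd
          rw [Nat.mul_div_cancel' hd.2]
      rw [h1]
      have h2 : ∑ e ∈ (g / p).divisors,
            (ArithmeticFunction.moebius (p * e) : ℤ) * coeff (m / (p * e)) (φ ^ (r / (p * e)))
          = ∑ e ∈ (g / p).divisors.filter (fun e => ¬ p ∣ e),
            (ArithmeticFunction.moebius (p * e) : ℤ) * coeff (m / (p * e)) (φ ^ (r / (p * e))) := by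
        refine (Finset.sum_filter_of_ne ?_).symm
        intro e he hne hpe
        apply hne
        have hnsq : ¬ Squarefree (p * e) := fun hsq =>
          hp.not_isUnit (hsq p (mul_dvd_mul_left p hpe))
        rw [ArithmeticFunction.moebius_eq_zero_of_not_squarefree hnsq, zero_mul]
      rw [h2]
      have h3 : (g / p).divisors.filter (fun e => ¬ p ∣ e)
          = T.filter (fun d => p ∣ m / d) := by
        ext d
        simp only [Finset.mem_filter, Nat.mem_divisors, hT]
        constructor
        · rintro ⟨⟨hdgp, -⟩, hpd⟩
          have hpdg : p * d ∣ g := by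
            have := (Nat.dvd_div_iff_mul_dvd hpg).mp hdgp
            exact this
          have hdg : d ∣ g := dvd_trans (dvd_mul_left d p) hpdg
          refine ⟨⟨⟨hdg, hg0⟩, hpd⟩, ?_⟩
          rw [Nat.dvd_div_iff_mul_dvd (dvd_trans hdg hgm)]
          rw [mul_comm]
          exact dvd_trans hpdg hgm
        · rintro ⟨⟨⟨hdg, -⟩, hpd⟩, hpmd⟩
          have hpdm : p * d ∣ m := by
            have := (Nat.dvd_div_iff_mul_dvd (dvd_trans hdg hgm)).mp hpmd
            rwa [mul_comm] at this
          have hpdr : p * d ∣ r :=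
            Nat.Coprime.mul_dvd_of_dvd_of_dvd ((hp.coprime_iff_not_dvd).mpr hpd)
              hpr (dvd_trans hdg hgr)
          have hpdg : p * d ∣ g := Nat.dvd_gcd hpdr hpdm
          exact ⟨⟨(Nat.dvd_div_iff_mul_dvd hpg).mpr hpdg, hgp0⟩, hpd⟩
      rw [h3, Finset.sum_filter]
      refine Finset.sum_congr rfl ?_
      intro d hd
      obtain ⟨hdg, hpd⟩ := hTmem d hd
      split_ifs with hpmd
      · have hcop : p.Coprime d := (hp.coprime_iff_not_dvd).mpr hpd
        rw [ArithmeticFunction.isMultiplicative_moebius.map_mul_of_coprime hcop,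
          ArithmeticFunction.moebius_apply_prime hp]
        push_cast
        ring
      · rfl
    · have hL : ∑ d ∈ g.divisors.filter (fun d => p ∣ d),
          (ArithmeticFunction.moebius d : ℤ) * coeff (m / d) (φ ^ (r / d)) = 0 := by
        refine Finset.sum_eq_zero ?_
        intro d hd
        rw [Finset.mem_filter, Nat.mem_divisors] at hd
        exact absurd (dvd_trans hd.2 hd.1.1) hpg
      have hR : ∑ d ∈ T, (if p ∣ m / d then
          -(ArithmeticFunction.moebius d : ℤ) * coeff (m / (p * d)) (φ ^ (r / (p * d)))
          else 0) = 0 := by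
        refine Finset.sum_eq_zero ?_
        intro d hd
        obtain ⟨hdg, -⟩ := hTmem d hd
        rw [if_neg]
        intro hpmd
        exact hpg (Nat.dvd_gcd hpr
          (dvd_trans hpmd (Nat.div_dvd_of_dvd (dvd_trans hdg hgm))))
      rw [hL, hR]
  rw [hA, ← Finset.sum_add_distrib]
  refine Finset.dvd_sum ?_
  intro d hd
  obtain ⟨hdg, hpd⟩ := hTmem d hd
  have hds : d ∣ s := Nat.Coprime.dvd_of_dvd_mul_left
    (Nat.Coprime.pow_right a ((hp.coprime_iff_not_dvd).mpr hpd).symm)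
    (by rw [hrs]; exact dvd_trans hdg hgr)
  have hrd : r / d = p ^ a * (s / d) := by
    rw [← hrs, Nat.mul_div_assoc _ hds]
  have hrpd : r / (p * d) = p ^ (a - 1) * (s / d) := by
    have h7 : r = p * (p ^ (a - 1) * s) := by
      rw [← hrs, ← mul_assoc, ← pow_succ', Nat.sub_add_cancel ha]
    rw [h7, Nat.mul_div_mul_left _ _ hpa, Nat.mul_div_assoc _ hds]
  have hmpd : m / (p * d) = (m / d) / p := by
    rw [Nat.div_div_eq_div_mul, mul_comm]
  have hkey := cng φ hφ hp a (s / d) (m / d) ha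
  rw [← hrd] at hkey
  have hterm : (if p ∣ m / d then
        -(ArithmeticFunction.moebius d : ℤ) * coeff (m / (p * d)) (φ ^ (r / (p * d)))
        else 0) + (ArithmeticFunction.moebius d : ℤ) * coeff (m / d) (φ ^ (r / d))
      = (ArithmeticFunction.moebius d : ℤ) * (coeff (m / d) (φ ^ (r / d)) -
        (if p ∣ m / d then coeff ((m / d) / p) (φ ^ (p ^ (a - 1) * (s / d))) else 0)) := by
    rw [hmpd, hrpd]
    split_ifs with h
    · ring
    · ring
  rw [hterm]
  exact Dvd.dvd.mul_left hkey _

/-! ### Application to the Fibonacci series and its negative -/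

theorem neg_fib_frobenius (p : ℕ) (hp : p.Prime) :
    ((p : ℕ) : PowerSeries ℤ) ∣ (-fibPS ℤ) ^ p - pexpand p hp.ne_zero (-fibPS ℤ) := by
  rcases hp.eq_two_or_odd' with rfl | hodd
  · have h1 : (-fibPS ℤ) ^ 2 - pexpand 2 (Nat.Prime.ne_zero (by norm_num)) (-fibPS ℤ)
        = (fibPS ℤ ^ 2 - pexpand 2 (Nat.Prime.ne_zero (by norm_num)) (fibPS ℤ))
          + 2 * pexpand 2 (Nat.Prime.ne_zero (by norm_num)) (fibPS ℤ) := by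
      rw [map_neg]
      ring
    rw [h1]
    refine dvd_add (fib_frobenius 2 hp) ⟨pexpand 2 hp.ne_zero (fibPS ℤ), ?_⟩
    norm_num
  · have h1 : (-fibPS ℤ) ^ p - pexpand p hp.ne_zero (-fibPS ℤ)
        = -(fibPS ℤ ^ p - pexpand p hp.ne_zero (fibPS ℤ)) := by
      rw [map_neg, hodd.neg_pow]
      ring
    rw [h1]
    exact dvd_neg.mpr (fib_frobenius p hp)

/-- `convFib r m` is the convolved Fibonacci number `F_{m+1}^{(r)}`, the coefficient of
`z^m` in `(1 - z - z^2)^{-r}`, given by `∑_{j_1+⋯+j_r=m} F_{j_1+1}⋯F_{j_r+1}`. -/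
def convFib (r m : ℕ) : ℕ :=
  ∑ t ∈ Finset.Nat.antidiagonalTuple r m, ∏ i, Nat.fib (t i + 1)

theorem convFib_eq_coeffN (k n : ℕ) : convFib k n = coeff n (fibPS ℕ ^ k) := by
  rw [fibPS, coeff_mk_pow]
  rfl

theorem convFib_cast (k n : ℕ) : ((convFib k n : ℕ) : ℤ) = coeff n (fibPS ℤ ^ k) := by
  rw [fibPS, coeff_mk_pow, convFib]
  push_cast
  rfl

theorem coeff_neg_fib_pow (k n : ℕ) :
    coeff n ((-fibPS ℤ) ^ k) = (-1) ^ k * (convFib k n : ℤ) := by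
  rw [neg_pow]
  have h1 : ((-1 : ℤ⟦X⟧)) ^ k = C ((-1 : ℤ) ^ k) := by
    rw [map_pow, map_neg, map_one]
  rw [h1, coeff_C_mul, convFib_cast]

/-! ### Elementary inequalities for `convFib` -/

theorem fib_ge (n : ℕ) : n ≤ Nat.fib (n + 1) := by
  induction n with
  | zero => simp
  | succ n ih =>
    rcases Nat.eq_zero_or_pos n with rfl | hn
    · simp
    · have h1 : 0 < Nat.fib n := Nat.fib_pos.mpr hn
      have h2 : Nat.fib (n + 1 + 1) = Nat.fib n + Nat.fib (n + 1) := Nat.fib_add_two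
      omega

theorem convFib_zero_right (k : ℕ) : convFib k 0 = 1 := by
  rw [convFib, Finset.Nat.antidiagonalTuple_zero_right, Finset.sum_singleton]
  simp

theorem one_le_prod_fib {k : ℕ} (t : Fin k → ℕ) : 1 ≤ ∏ i, Nat.fib (t i + 1) :=
  Finset.one_le_prod' fun i _ => Nat.fib_pos.mpr (Nat.succ_pos _)

theorem card_le_convFib (k n : ℕ) :
    (Finset.Nat.antidiagonalTuple k n).card ≤ convFib k n := by
  have := Finset.card_nsmul_le_sum (Finset.Nat.antidiagonalTuple k n)
    (fun t => ∏ i, Nat.fib (t i + 1)) 1 (fun t _ => one_le_prod_fib t)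
  simpa [convFib] using this

theorem le_card_antidiagonalTuple {k n : ℕ} (hn : 1 ≤ n) :
    k ≤ (Finset.Nat.antidiagonalTuple k n).card := by
  have hf : ∀ i ∈ (Finset.univ : Finset (Fin k)),
      (fun j => if j = i then n else 0) ∈ Finset.Nat.antidiagonalTuple k n := by
    intro i _
    rw [Finset.Nat.mem_antidiagonalTuple]
    rw [Finset.sum_ite_eq' Finset.univ i (fun _ => n)]
    simp
  have hi : Set.InjOn (fun i => (fun j => if j = i then n else 0))
      ((Finset.univ : Finset (Fin k)) : Set (Fin k)) := by
    intro i _ i' _ hii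
    by_contra hne
    have h : (if i = i then n else 0) = (if i = i' then n else 0) := congrFun hii i
    rw [if_pos rfl, if_neg hne] at h
    omega
  have h : (Finset.univ : Finset (Fin k)).card ≤ (Finset.Nat.antidiagonalTuple k n).card :=
    Finset.card_le_card_of_injOn _ hf hi
  simpa using h

theorem convFib_ge (k n : ℕ) (hk : 1 ≤ k) (hn : 1 ≤ n) :
    k - 1 + Nat.fib (n + 1) ≤ convFib k n := by
  obtain ⟨k', rfl⟩ : ∃ k', k = k' + 1 := ⟨k - 1, by omega⟩
  set t₀ : Fin (k' + 1) → ℕ := Fin.cons n 0 with ht₀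
  have hmem : t₀ ∈ Finset.Nat.antidiagonalTuple (k' + 1) n := by
    rw [Finset.Nat.mem_antidiagonalTuple, ht₀, Fin.sum_cons]
    simp
  have hval : ∏ i, Nat.fib (t₀ i + 1) = Nat.fib (n + 1) := by
    rw [ht₀]
    simp [Fin.prod_univ_succ]
  have herase : ((Finset.Nat.antidiagonalTuple (k' + 1) n).erase t₀).card
      = (Finset.Nat.antidiagonalTuple (k' + 1) n).card - 1 :=
    Finset.card_erase_of_mem hmem
  have hsum2 : ((Finset.Nat.antidiagonalTuple (k' + 1) n).erase t₀).card
      ≤ ∑ t ∈ (Finset.Nat.antidiagonalTuple (k' + 1) n).erase t₀, ∏ i, Nat.fib (t i + 1) := by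
    have := Finset.card_nsmul_le_sum ((Finset.Nat.antidiagonalTuple (k' + 1) n).erase t₀)
      (fun t => ∏ i, Nat.fib (t i + 1)) 1 (fun t _ => one_le_prod_fib t)
    simpa using this
  have hcard := le_card_antidiagonalTuple (k := k' + 1) hn
  have hk2 : k' ≤ ((Finset.Nat.antidiagonalTuple (k' + 1) n).erase t₀).card := by
    rw [herase]
    exact Nat.le_sub_one_of_lt (lt_of_lt_of_le (Nat.lt_succ_self k') hcard)
  calc k' + 1 - 1 + Nat.fib (n + 1)
      ≤ (∏ i, Nat.fib (t₀ i + 1))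
        + ((Finset.Nat.antidiagonalTuple (k' + 1) n).erase t₀).card := by
        rw [hval, Nat.add_sub_cancel, Nat.add_comm k' (Nat.fib (n + 1))]
        exact Nat.add_le_add_left hk2 _
    _ ≤ (∏ i, Nat.fib (t₀ i + 1))
        + ∑ t ∈ (Finset.Nat.antidiagonalTuple (k' + 1) n).erase t₀, ∏ i, Nat.fib (t i + 1) :=
        Nat.add_le_add_left hsum2 _
    _ = convFib (k' + 1) n := by
        rw [convFib]
        exact Finset.add_sum_erase _ (fun t => ∏ i, Nat.fib (t i + 1)) hmem

theorem convFib_pos (k n : ℕ) (hk : 1 ≤ k) : 1 ≤ convFib k n := by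
  rcases Nat.eq_zero_or_pos n with rfl | hn
  · rw [convFib_zero_right]
  · have := convFib_ge k n hk hn
    have h1 : 1 ≤ Nat.fib (n + 1) := Nat.fib_pos.mpr (Nat.succ_pos _)
    omega

theorem convFib_mul_le (a b ma mb : ℕ) :
    convFib a ma * convFib b mb ≤ convFib (a + b) (ma + mb) := by
  rw [convFib_eq_coeffN, convFib_eq_coeffN, convFib_eq_coeffN, pow_add, coeff_mul]
  exact Finset.single_le_sum (f := fun q => coeff q.1 (fibPS ℕ ^ a) * coeff q.2 (fibPS ℕ ^ b))
    (fun q _ => Nat.zero_le _) (a := ((ma, mb) : ℕ × ℕ)) (Finset.HasAntidiagonal.mem_antidiagonal.mpr rfl)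

/-! ### Divisor counting -/

theorem card_divisors_le (n : ℕ) : n.divisors.card ≤ n := by
  rcases Nat.eq_zero_or_pos n with rfl | hn
  · simp
  calc n.divisors.card ≤ (Finset.Icc 1 n).card :=
        Finset.card_le_card (fun d hd => Finset.mem_Icc.mpr
          ⟨Nat.pos_of_mem_divisors hd, Nat.divisor_le hd⟩)
    _ = n := by rw [Nat.card_Icc]; omega
  
theorem card_divisors_lt (n : ℕ) (hn : 3 ≤ n) : n.divisors.card < n := by
  have h1 : n.divisors ⊆ (Finset.Icc 1 n).erase (n - 1) := by
    intro d hd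
    rw [Finset.mem_erase]
    refine ⟨?_, Finset.mem_Icc.mpr ⟨Nat.pos_of_mem_divisors hd, Nat.divisor_le hd⟩⟩
    rintro rfl
    have hd2 : (n - 1) ∣ n := (Nat.mem_divisors.mp hd).1
    have hd3 : (n - 1) ∣ n - (n - 1) := Nat.dvd_sub hd2 dvd_rfl
    have hd4 : n - (n - 1) = 1 := by omega
    rw [hd4] at hd3
    have := Nat.le_of_dvd one_pos hd3
    omega
  have h2 := Finset.card_le_card h1
  rw [Finset.card_erase_of_mem (Finset.mem_Icc.mpr ⟨by omega, by omega⟩), Nat.card_Icc] at h2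
  omega

/-! ### Positivity of the Möbius-type sums -/

theorem moebius_bounds (d : ℕ) :
    -1 ≤ (ArithmeticFunction.moebius d : ℤ) ∧ (ArithmeticFunction.moebius d : ℤ) ≤ 1 := by
  by_cases h : Squarefree d
  · rw [ArithmeticFunction.moebius_apply_of_squarefree h]
    rcases Nat.even_or_odd (ArithmeticFunction.cardFactors d) with he | ho
    · rw [he.neg_one_pow]; omega
    · rw [ho.neg_one_pow]; omega
  · rw [ArithmeticFunction.moebius_eq_zero_of_not_squarefree h]; omega

theorem pos_sum (w : ℕ → ℤ) (hw1 : w 1 = 1) (hw : ∀ d, -1 ≤ w d ∧ w d ≤ 1)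
    (r m : ℕ) (hr : 1 ≤ r) (hm : 1 ≤ m) :
    0 < ∑ d ∈ (Nat.gcd r m).divisors, w d * (convFib (r / d) (m / d) : ℤ) := by
  set g := Nat.gcd r m with hgdef
  have hgr : g ∣ r := Nat.gcd_dvd_left r m
  have hgm : g ∣ m := Nat.gcd_dvd_right r m
  have hg0 : g ≠ 0 := Nat.gcd_ne_zero_left (by omega)
  have hgler : g ≤ r := Nat.le_of_dvd (by omega) hgr
  have hglem : g ≤ m := Nat.le_of_dvd (by omega) hgm
  rcases eq_or_ne g 1 with hg1 | hg1
  · rw [hg1, Nat.divisors_one, Finset.sum_singleton, Nat.div_one, Nat.div_one, hw1, one_mul]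
    exact_mod_cast convFib_pos r m hr
  by_cases hspec : r = 2 ∧ m = 2
  · obtain ⟨rfl, rfl⟩ := hspec
    have hg2 : g = 2 := by rw [hgdef]; decide
    rw [hg2, show (2:ℕ).divisors = {1, 2} from by decide,
      Finset.sum_insert (by decide), Finset.sum_singleton]
    norm_num
    rw [show convFib 2 2 = 5 from by decide, show convFib 1 1 = 1 from by decide, hw1]
    have := (hw 2).1
    push_cast
    omega
  -- general case
  set q := g.minFac with hqdef
  have hqp : q.Prime := Nat.minFac_prime hg1
  have hq2 : 2 ≤ q := hqp.two_le
  have hqg : q ∣ g := Nat.minFac_dvd g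
  have hqr : q ∣ r := hqg.trans hgr
  have hqm : q ∣ m := hqg.trans hgm
  have hq0 : 0 < q := by omega
  have hrq1 : 1 ≤ r / q := Nat.div_pos (Nat.le_of_dvd (by omega) hqr) hq0
  have hrqlt : r / q < r := Nat.div_lt_self (by omega) (by omega)
  have hmqlt : m / q < m := Nat.div_lt_self (by omega) (by omega)
  have hrq2 : r / q ≤ r / 2 := Nat.div_le_div_left hq2 (by omega)
  have hmq2 : m / q ≤ m / 2 := Nat.div_le_div_left hq2 (by omega)
  set A := r - r / q with hAdef
  set B := m - m / q with hBdef
  have hA1 : 1 ≤ A := by omega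
  have hB1 : 1 ≤ B := by omega
  have hsup : convFib (r / q) (m / q) * convFib A B ≤ convFib r m := by
    have h := convFib_mul_le (r / q) A (m / q) B
    have e1 : r / q + A = r := by omega
    have e2 : m / q + B = m := by omega
    rwa [e1, e2] at h
  have hcq : 1 ≤ convFib (r / q) (m / q) := convFib_pos _ _ hrq1
  have hcA : A + B - 1 ≤ convFib A B := by
    have h1 := convFib_ge A B hA1 hB1
    have h2 := fib_ge B
    omega
  have hτ : g.divisors.card ≤ A + B - 1 := by
    rcases lt_or_ge g 3 with h3 | h3
    · have hg2 : g = 2 := by omega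
      have hq2' : q = 2 := by rw [hqdef, hg2]; decide
      have hA2 : A = r - r / 2 := by rw [hAdef, hq2']
      have hB2 : B = m - m / 2 := by rw [hBdef, hq2']
      have hcard2 : g.divisors.card = 2 := by rw [hg2]; decide
      have h2r : 2 ∣ r := by rw [← hg2]; exact hgr
      have h2m : 2 ∣ m := by rw [← hg2]; exact hgm
      have hns : ¬(r = 2 ∧ m = 2) := hspec
      omega
    · have hlt := card_divisors_lt g h3
      omega
  -- assemble
  have h1mem : 1 ∈ g.divisors := Nat.one_mem_divisors.mpr hg0
  have hcard1 : 1 ≤ g.divisors.card := Finset.card_pos.mpr ⟨1, h1mem⟩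
  have hterm : ∀ d ∈ g.divisors.erase 1,
      -((convFib (r / q) (m / q) : ℕ) : ℤ) ≤ w d * ((convFib (r / d) (m / d) : ℕ) : ℤ) := by
    intro d hd
    have hmem := Finset.mem_of_mem_erase hd
    have hne1 : d ≠ 1 := Finset.ne_of_mem_erase hd
    have hdg : d ∣ g := (Nat.mem_divisors.mp hmem).1
    have hd1 : 1 ≤ d := Nat.pos_of_mem_divisors hmem
    have hd2 : 2 ≤ d := by omega
    have hqd : q ≤ d := Nat.minFac_le_of_dvd hd2 hdg
    have hdr : d ∣ r := hdg.trans hgr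
    have hmono : convFib (r / d) (m / d) ≤ convFib (r / q) (m / q) := by
      rcases eq_or_lt_of_le hqd with rfl | hlt
      · exact le_refl _
      · have hle1 : r / d ≤ r / q := Nat.div_le_div_left (le_of_lt hlt) hq0
        have hle2 : m / d ≤ m / q := Nat.div_le_div_left (le_of_lt hlt) hq0
        have hne : r / d ≠ r / q := by
          intro heq
          have e1 : r / (r / d) = d := Nat.div_div_self hdr (by omega)
          have e2 : r / (r / q) = q := Nat.div_div_self hqr (by omega)
          rw [heq, e2] at e1
          omega
        have hgap : 1 ≤ r / q - r / d := by omega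
        calc convFib (r / d) (m / d)
            ≤ convFib (r / d) (m / d) * convFib (r / q - r / d) (m / q - m / d) :=
              Nat.le_mul_of_pos_right _ (convFib_pos _ _ hgap)
          _ ≤ convFib (r / d + (r / q - r / d)) (m / d + (m / q - m / d)) :=
              convFib_mul_le _ _ _ _
          _ = convFib (r / q) (m / q) := by congr 1 <;> omega
    have hwd := hw d
    have hc0 : (0:ℤ) ≤ ((convFib (r / d) (m / d) : ℕ) : ℤ) := Int.natCast_nonneg _
    have hcle : ((convFib (r / d) (m / d) : ℕ) : ℤ) ≤ ((convFib (r / q) (m / q) : ℕ) : ℤ) := by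
      exact_mod_cast hmono
    nlinarith [hwd.1, hwd.2]
  have hsum := Finset.card_nsmul_le_sum (g.divisors.erase 1)
    (fun d => w d * ((convFib (r / d) (m / d) : ℕ) : ℤ))
    (-((convFib (r / q) (m / q) : ℕ) : ℤ)) hterm
  have hcarde : (g.divisors.erase 1).card = g.divisors.card - 1 :=
    Finset.card_erase_of_mem h1mem
  have hEge : ((g.divisors.card : ℤ) - 1) * (-((convFib (r / q) (m / q) : ℕ) : ℤ))
      ≤ ∑ d ∈ g.divisors.erase 1, w d * ((convFib (r / d) (m / d) : ℕ) : ℤ) := by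
    have h9 := hsum
    rw [nsmul_eq_mul, hcarde] at h9
    have h10 : ((g.divisors.card - 1 : ℕ) : ℤ) = (g.divisors.card : ℤ) - 1 := by
      push_cast [Nat.cast_sub hcard1]
      ring
    rwa [h10] at h9
  have hXY : ((convFib (r / q) (m / q) : ℕ) : ℤ) * ((convFib A B : ℕ) : ℤ)
      ≤ ((convFib r m : ℕ) : ℤ) := by exact_mod_cast hsup
  have hYN : ((g.divisors.card : ℕ) : ℤ) ≤ ((convFib A B : ℕ) : ℤ) := by
    exact_mod_cast le_trans hτ hcA
  have hX1 : (1:ℤ) ≤ ((convFib (r / q) (m / q) : ℕ) : ℤ) := by exact_mod_cast hcq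
  have hN1 : (1:ℤ) ≤ ((g.divisors.card : ℕ) : ℤ) := by exact_mod_cast hcard1
  have hP : ((convFib (r / q) (m / q) : ℕ) : ℤ) * ((g.divisors.card : ℕ) : ℤ)
      ≤ ((convFib (r / q) (m / q) : ℕ) : ℤ) * ((convFib A B : ℕ) : ℤ) :=
    mul_le_mul_of_nonneg_left hYN (by linarith)
  have hexp : ((g.divisors.card : ℤ) - 1) * (-((convFib (r / q) (m / q) : ℕ) : ℤ))
      = -(((convFib (r / q) (m / q) : ℕ) : ℤ) * ((g.divisors.card : ℕ) : ℤ))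
        + ((convFib (r / q) (m / q) : ℕ) : ℤ) := by ring
  rw [hexp] at hEge
  have key : (0:ℤ) < w 1 * ((convFib (r / 1) (m / 1) : ℕ) : ℤ)
      + ∑ d ∈ g.divisors.erase 1, w d * ((convFib (r / d) (m / d) : ℕ) : ℤ) := by
    rw [Nat.div_one, Nat.div_one, hw1, one_mul]
    linarith
  calc (0:ℤ) < w 1 * ((convFib (r / 1) (m / 1) : ℕ) : ℤ)
      + ∑ d ∈ g.divisors.erase 1, w d * ((convFib (r / d) (m / d) : ℕ) : ℤ) := key
    _ = ∑ d ∈ g.divisors, w d * ((convFib (r / d) (m / d) : ℕ) : ℤ) :=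
      Finset.add_sum_erase _ (fun d => w d * ((convFib (r / d) (m / d) : ℕ) : ℤ)) h1mem

theorem nonneg_m0 (w : ℕ → ℤ) (hw1 : w 1 = 1) (hw : ∀ d, -1 ≤ w d ∧ w d ≤ 1)
    (r : ℕ) (hr : 1 ≤ r) (hdvd : (r : ℤ) ∣ ∑ d ∈ r.divisors, w d) :
    0 ≤ ∑ d ∈ r.divisors, w d := by
  set U := ∑ d ∈ r.divisors, w d with hU
  by_contra hneg
  push_neg at hneg
  have h1 : (r:ℤ) ∣ -U := dvd_neg.mpr hdvd
  have h2 : (r:ℤ) ≤ -U := Int.le_of_dvd (by omega) h1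
  have h3 : |U| ≤ (r.divisors.card : ℤ) := by
    calc |U| ≤ ∑ d ∈ r.divisors, |w d| := Finset.abs_sum_le_sum_abs _ _
      _ ≤ ∑ d ∈ r.divisors, 1 := Finset.sum_le_sum (fun d _ => abs_le.mpr ⟨(hw d).1, (hw d).2⟩)
      _ = (r.divisors.card : ℤ) := by rw [Finset.sum_const]; simp
  have h4 : (r.divisors.card : ℤ) ≤ (r : ℤ) := by exact_mod_cast card_divisors_le r
  have habs : -U ≤ |U| := neg_le_abs U
  have hr3 : r < 3 := by
    by_contra hge
    have := card_divisors_lt r (by omega)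
    omega
  interval_cases r
  · rw [hU, Nat.divisors_one, Finset.sum_singleton, hw1] at hneg
    omega
  · rw [hU, show (2:ℕ).divisors = {1, 2} from by decide,
      Finset.sum_insert (by decide), Finset.sum_singleton, hw1] at hneg
    have := (hw 2).1
    omega

/-! ### Main theorem -/

/-- The convoluted convolved Fibonacci numbers:
`Gfib r m = G_{m+1}^{(r)} = (1/r) ∑_{d ∣ gcd(r,m)} μ(d) F_{m/d+1}^{(r/d)}`. -/
noncomputable def Gfib (r m : ℕ) : ℚ :=
  (1 / (r : ℚ)) * ∑ d ∈ (Nat.gcd r m).divisors,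
    ((ArithmeticFunction.moebius d : ℤ) : ℚ) * convFib (r / d) (m / d)

/-- The sign twisted convoluted convolved Fibonacci numbers:
`Hfib r m = H_{m+1}^{(r)} = ((-1)^r/r) ∑_{d ∣ gcd(r,m)} μ(d) (-1)^{r/d} F_{m/d+1}^{(r/d)}`. -/
noncomputable def Hfib (r m : ℕ) : ℚ :=
  ((-1 : ℚ) ^ r / (r : ℚ)) * ∑ d ∈ (Nat.gcd r m).divisors,
    ((ArithmeticFunction.moebius d : ℤ) : ℚ) * (-1 : ℚ) ^ (r / d) * convFib (r / d) (m / d)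

/-- Proposition 1, parts 1)-2): for `j, r ≥ 1`, `G_j^{(r)}` and `H_j^{(r)}` are
non-negative integers, and if `j ≥ 2` then `G_j^{(r)} ≥ 1` and `H_j^{(r)} ≥ 1`.
(Here `G_j^{(r)} = Gfib r (j-1)` and `H_j^{(r)} = Hfib r (j-1)`.) -/
theorem Gfib_Hfib_nonneg_int (j r : ℕ) (hj : 1 ≤ j) (hr : 1 ≤ r) :
    (∃ n : ℕ, Gfib r (j - 1) = n) ∧ (∃ n : ℕ, Hfib r (j - 1) = n) ∧
      (2 ≤ j → 1 ≤ Gfib r (j - 1) ∧ 1 ≤ Hfib r (j - 1)) := by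
  set m := j - 1 with hmdef
  have hr0 : 0 < r := hr
  have hrQ : ((r : ℕ) : ℚ) ≠ 0 := by positivity
  -- the two integer sums
  set SG : ℤ := ∑ d ∈ (Nat.gcd r m).divisors,
    (ArithmeticFunction.moebius d : ℤ) * ((convFib (r / d) (m / d) : ℕ) : ℤ) with hSG
  set TH : ℤ := ∑ d ∈ (Nat.gcd r m).divisors,
    (ArithmeticFunction.moebius d : ℤ) *
      ((-1 : ℤ) ^ (r / d) * ((convFib (r / d) (m / d) : ℕ) : ℤ)) with hTH
  set UH : ℤ := ∑ d ∈ (Nat.gcd r m).divisors,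
    ((ArithmeticFunction.moebius d : ℤ) * (-1 : ℤ) ^ (r + r / d)) *
      ((convFib (r / d) (m / d) : ℕ) : ℤ) with hUH
  -- divisibility
  have hSGdvd : ((r : ℕ) : ℤ) ∣ SG := by
    have h := gauss (fibPS ℤ) fib_frobenius r m hr0
    have heq : SG = ∑ d ∈ (Nat.gcd r m).divisors,
        (ArithmeticFunction.moebius d : ℤ) * coeff (m / d) (fibPS ℤ ^ (r / d)) := by
      rw [hSG]
      exact Finset.sum_congr rfl fun d _ => by rw [convFib_cast]
    rw [heq]
    exact h
  have hTHdvd : ((r : ℕ) : ℤ) ∣ TH := by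
    have h := gauss (-fibPS ℤ) neg_fib_frobenius r m hr0
    have heq : TH = ∑ d ∈ (Nat.gcd r m).divisors,
        (ArithmeticFunction.moebius d : ℤ) * coeff (m / d) ((-fibPS ℤ) ^ (r / d)) := by
      rw [hTH]
      exact Finset.sum_congr rfl fun d _ => by rw [coeff_neg_fib_pow]
    rw [heq]
    exact h
  have hUT : UH = (-1 : ℤ) ^ r * TH := by
    rw [hUH, hTH, Finset.mul_sum]
    refine Finset.sum_congr rfl fun d _ => ?_
    rw [pow_add]
    ring
  have hUHdvd : ((r : ℕ) : ℤ) ∣ UH := by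
    rw [hUT]
    exact Dvd.dvd.mul_left hTHdvd _
  -- weights
  have hwG1 : (ArithmeticFunction.moebius 1 : ℤ) = 1 := by
    exact_mod_cast ArithmeticFunction.moebius_apply_one
  have hwHb : ∀ d, -1 ≤ (ArithmeticFunction.moebius d : ℤ) * (-1 : ℤ) ^ (r + r / d) ∧
      (ArithmeticFunction.moebius d : ℤ) * (-1 : ℤ) ^ (r + r / d) ≤ 1 := by
    intro d
    have hb := moebius_bounds d
    rcases Nat.even_or_odd (r + r / d) with he | ho
    · rw [he.neg_one_pow, mul_one]
      exact hb
    · rw [ho.neg_one_pow, mul_neg_one]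
      omega
  have hwH1 : (ArithmeticFunction.moebius 1 : ℤ) * (-1 : ℤ) ^ (r + r / 1) = 1 := by
    rw [hwG1, Nat.div_one, Even.neg_one_pow ⟨r, rfl⟩, one_mul]
  -- nonnegativity / positivity of SG
  have hSGcases : 0 ≤ SG ∧ (1 ≤ m → 0 < SG) := by
    constructor
    · rcases Nat.eq_zero_or_pos m with hm0 | hm1
      · have hgcd0 : Nat.gcd r 0 = r := Nat.gcd_zero_right r
        have heq : SG = ∑ d ∈ r.divisors, (ArithmeticFunction.moebius d : ℤ) := by
          rw [hSG, hm0, hgcd0]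
          refine Finset.sum_congr rfl fun d _ => by
            rw [Nat.zero_div, convFib_zero_right]
            push_cast
            ring
        rw [heq]
        refine nonneg_m0 _ hwG1 moebius_bounds r hr ?_
        rw [← heq]
        exact hSGdvd
      · exact le_of_lt (pos_sum _ hwG1 moebius_bounds r m hr hm1)
    · intro hm1
      exact pos_sum _ hwG1 moebius_bounds r m hr hm1
  -- nonnegativity / positivity of UH
  have hUHw : UH = ∑ d ∈ (Nat.gcd r m).divisors,
      (fun d => (ArithmeticFunction.moebius d : ℤ) * (-1 : ℤ) ^ (r + r / d)) d *
        ((convFib (r / d) (m / d) : ℕ) : ℤ) := hUH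
  have hUHcases : 0 ≤ UH ∧ (1 ≤ m → 0 < UH) := by
    constructor
    · rcases Nat.eq_zero_or_pos m with hm0 | hm1
      · have hgcd0 : Nat.gcd r 0 = r := Nat.gcd_zero_right r
        have heq : UH = ∑ d ∈ r.divisors,
            (fun d => (ArithmeticFunction.moebius d : ℤ) * (-1 : ℤ) ^ (r + r / d)) d := by
          rw [hUH, hm0, hgcd0]
          refine Finset.sum_congr rfl fun d _ => by
            rw [Nat.zero_div, convFib_zero_right]
            push_cast
            ring
        rw [heq]
        refine nonneg_m0 _ hwH1 hwHb r hr ?_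
        rw [← heq]
        exact hUHdvd
      · exact le_of_lt (pos_sum _ hwH1 hwHb r m hr hm1)
    · intro hm1
      exact pos_sum _ hwH1 hwHb r m hr hm1
  -- rational identifications
  have hGq : Gfib r m = ((SG : ℤ) : ℚ) / ((r : ℕ) : ℚ) := by
    simp only [Gfib]
    have hcast : ∑ d ∈ (Nat.gcd r m).divisors,
        ((ArithmeticFunction.moebius d : ℤ) : ℚ) * ((convFib (r / d) (m / d) : ℕ) : ℚ)
        = ((SG : ℤ) : ℚ) := by
      rw [hSG]
      push_cast
      rfl
    rw [hcast]
    ring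
  have hHq : Hfib r m = ((UH : ℤ) : ℚ) / ((r : ℕ) : ℚ) := by
    simp only [Hfib]
    have hcast : ∑ d ∈ (Nat.gcd r m).divisors,
        ((ArithmeticFunction.moebius d : ℤ) : ℚ) * (-1 : ℚ) ^ (r / d)
          * ((convFib (r / d) (m / d) : ℕ) : ℚ)
        = ((TH : ℤ) : ℚ) := by
      rw [hTH]
      push_cast
      exact Finset.sum_congr rfl fun d _ => by ring
    rw [hcast]
    have hUTQ : ((UH : ℤ) : ℚ) = (-1 : ℚ) ^ r * ((TH : ℤ) : ℚ) := by
      rw [hUT]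
      push_cast
      ring
    rw [hUTQ]
    ring
  -- packaging
  have pack : ∀ V : ℤ, ((r : ℕ) : ℤ) ∣ V → 0 ≤ V → ∃ n : ℕ, ((V : ℤ) : ℚ) / ((r : ℕ) : ℚ) = (n : ℚ) := by
    intro V hdvd h0
    obtain ⟨t, ht⟩ := hdvd
    have ht0 : 0 ≤ t := by
      by_contra hneg
      push_neg at hneg
      have : ((r : ℕ) : ℤ) * t < 0 :=
        mul_neg_of_pos_of_neg (by exact_mod_cast hr0) hneg
      omega
    refine ⟨t.toNat, ?_⟩
    rw [ht]
    have h1 : ((((r : ℕ) : ℤ) * t : ℤ) : ℚ) = ((r : ℕ) : ℚ) * ((t : ℤ) : ℚ) := by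
      push_cast
      ring
    rw [h1, mul_comm, mul_div_assoc, div_self hrQ, mul_one]
    exact_mod_cast (Int.toNat_of_nonneg ht0).symm
  have pack2 : ∀ V : ℤ, ((r : ℕ) : ℤ) ∣ V → 0 < V → 1 ≤ ((V : ℤ) : ℚ) / ((r : ℕ) : ℚ) := by
    intro V hdvd h0
    have hle : ((r : ℕ) : ℤ) ≤ V := Int.le_of_dvd h0 hdvd
    rw [one_le_div (by positivity : (0:ℚ) < ((r : ℕ) : ℚ))]
    exact_mod_cast hle
  refine ⟨?_, ?_, ?_⟩
  · rw [hGq]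
    exact pack SG hSGdvd hSGcases.1
  · rw [hHq]
    exact pack UH hUHdvd hUHcases.1
  · intro hj2
    have hm1 : 1 ≤ m := by omega
    constructor
    · rw [hGq]
      exact pack2 SG hSGdvd (hSGcases.2 hm1)
    · rw [hHq]
      exact pack2 UH hUHdvd (hUHcases.2 hm1)
end

section
/- For all integers j ≥ 1 and r ≥ 1, F_{j+1}^{(r)} = Σ multinomial(r; n_1, …, n_j) · F_2^{n_1} · F_3^{n_2} ⋯ F_{j+1}^{n_j}, where the sum is over all tuples (n_1, …, n_j) of non-negative integers with Σ_{k=1}^j k·n_k = j, and multinomial(r; n_1, …, n_j) = r! / (n_1! n_2! ⋯ n_j! (r − n_1 − ⋯ − n_j)!) when n_1 + ⋯ + n_j ≤ r, and 0 otherwise. -/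
/-- `multinomGen r n = r! / (n_1! ⋯ n_j! (r - n_1 - ⋯ - n_j)!)` when
`n_1 + ⋯ + n_j ≤ r`, and `0` otherwise. -/
def multinomGen (r : ℕ) {j : ℕ} (n : Fin j → ℕ) : ℕ :=
  if (∑ k, n k) ≤ r then
    Nat.factorial r / ((∏ k, Nat.factorial (n k)) * Nat.factorial (r - ∑ k, n k))
  else 0

open Finset PowerSeries

noncomputable def phiPS (j : ℕ) : PowerSeries ℕ :=
  ∑ k ∈ Finset.range (j + 1), PowerSeries.C (Nat.fib (k + 1)) * PowerSeries.X ^ k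

lemma coeff_phiPS (j m : ℕ) (h : m ≤ j) :
    PowerSeries.coeff m (phiPS j) = Nat.fib (m + 1) := by
  rw [phiPS, map_sum]
  simp only [PowerSeries.coeff_C_mul, PowerSeries.coeff_X_pow, mul_ite, mul_one, mul_zero]
  rw [Finset.sum_ite_eq (Finset.range (j+1)) m (fun k => Nat.fib (k+1))]
  simp [Nat.lt_succ_of_le h]

lemma convFib_eq_coeff (r j : ℕ) :
    convFib r j = PowerSeries.coeff j ((phiPS j) ^ r) := by
  classical
  rw [PowerSeries.coeff_pow, convFib]
  refine Finset.sum_nbij'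
    (i := fun t => Finsupp.indicator (Finset.range r)
      (fun i hi => t ⟨i, Finset.mem_range.1 hi⟩))
    (j := fun l => fun i : Fin r => l i.1) ?_ ?_ ?_ ?_ ?_
  · intro t ht
    rw [Finset.mem_finsuppAntidiag]
    refine ⟨?_, Finsupp.support_indicator_subset _ _⟩
    rw [Finset.Nat.mem_antidiagonalTuple] at ht
    calc (Finset.range r).sum ⇑(Finsupp.indicator (Finset.range r)
            (fun i hi => t ⟨i, Finset.mem_range.1 hi⟩))
        = ∑ i ∈ Finset.range r, (if h : i < r then t ⟨i, h⟩ else 0) := by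
          apply Finset.sum_congr rfl
          intro i hi
          rw [Finsupp.indicator_of_mem hi, dif_pos (Finset.mem_range.1 hi)]
      _ = ∑ i : Fin r, (if h : (i : ℕ) < r then t ⟨i, h⟩ else 0) :=
          (Fin.sum_univ_eq_sum_range (fun i => if h : i < r then t ⟨i, h⟩ else 0) r).symm
      _ = ∑ i : Fin r, t i := by
          apply Finset.sum_congr rfl
          intro i _
          simp [i.isLt]
      _ = j := ht
  · intro l hl
    rw [Finset.mem_finsuppAntidiag] at hl
    rw [Finset.Nat.mem_antidiagonalTuple, Fin.sum_univ_eq_sum_range (fun i => l i) r, hl.1]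
  · intro t ht
    funext i
    show (Finsupp.indicator (Finset.range r)
      (fun i hi => t ⟨i, Finset.mem_range.1 hi⟩)) i.1 = t i
    rw [Finsupp.indicator_of_mem (Finset.mem_range.2 i.isLt)]
  · intro l hl
    rw [Finset.mem_finsuppAntidiag] at hl
    ext i
    by_cases hi : i ∈ Finset.range r
    · rw [Finsupp.indicator_of_mem hi]
    · rw [Finsupp.indicator_of_notMem hi]
      exact (Finsupp.notMem_support_iff.1 (fun hs => hi (hl.2 hs))).symm
  · intro t ht
    rw [Finset.Nat.mem_antidiagonalTuple] at ht
    have hb : ∀ i : Fin r, t i ≤ j := by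
      intro i
      rw [← ht]
      exact Finset.single_le_sum (fun _ _ => Nat.zero_le _) (Finset.mem_univ i)
    rw [← Fin.prod_univ_eq_prod_range
        (fun i => PowerSeries.coeff (((fun t => Finsupp.indicator (Finset.range r)
          (fun i hi => t ⟨i, Finset.mem_range.1 hi⟩)) t) i) (phiPS j)) r]
    apply Finset.prod_congr rfl
    intro i _
    show Nat.fib (t i + 1) = PowerSeries.coeff ((Finsupp.indicator (Finset.range r)
      (fun i hi => t ⟨i, Finset.mem_range.1 hi⟩)) i.1) (phiPS j)
    rw [Finsupp.indicator_of_mem (Finset.mem_range.2 i.isLt)]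
    rw [coeff_phiPS j _ (hb _)]

/-- The multinomial expansion: for `j, r ≥ 1`,
`F_{j+1}^{(r)} = ∑_{∑ k n_k = j} multinomial(r; n_1, …, n_j) F_2^{n_1} ⋯ F_{j+1}^{n_j}`,
the sum over all tuples `(n_1, …, n_j)` of non-negative integers with
`∑_{k=1}^j k n_k = j` (all of which satisfy `n_k ≤ j`). -/
theorem convFib_multinomial (j r : ℕ) (hj : 1 ≤ j) (hr : 1 ≤ r) :
    convFib r j =
      ∑ n ∈ (Fintype.piFinset fun _ : Fin j => Finset.range (j + 1)).filter
          (fun n => ∑ k, (k.1 + 1) * n k = j),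
        multinomGen r n * ∏ k, Nat.fib (k.1 + 2) ^ n k := by
  classical
  -- LHS via power series coefficient and multinomial theorem
  rw [convFib_eq_coeff, phiPS, Finset.sum_pow_eq_sum_piAntidiag, map_sum]
  have hterm : ∀ m ∈ Finset.piAntidiag (Finset.range (j+1)) r,
      PowerSeries.coeff j ((Nat.multinomial (Finset.range (j+1)) m : PowerSeries ℕ) *
        ∏ k ∈ Finset.range (j+1), (PowerSeries.C (Nat.fib (k+1)) * PowerSeries.X ^ k) ^ m k)
      = if j = ∑ k ∈ Finset.range (j+1), k * m k then
          Nat.multinomial (Finset.range (j+1)) m * ∏ k ∈ Finset.range (j+1),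
            Nat.fib (k+1) ^ m k
        else 0 := by
    intro m _
    have : ∏ k ∈ Finset.range (j+1), (PowerSeries.C (Nat.fib (k+1)) * PowerSeries.X ^ k) ^ m k
        = PowerSeries.C (∏ k ∈ Finset.range (j+1), Nat.fib (k+1) ^ m k) *
          PowerSeries.X ^ (∑ k ∈ Finset.range (j+1), k * m k) := by
      rw [map_prod, ← Finset.prod_pow_eq_pow_sum, ← Finset.prod_mul_distrib]
      apply Finset.prod_congr rfl
      intro k _
      rw [mul_pow, map_pow, ← pow_mul]
    rw [this, ← map_natCast (PowerSeries.C (R := ℕ)), Nat.cast_id, ← mul_assoc, ← map_mul,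
      PowerSeries.coeff_C_mul, PowerSeries.coeff_X_pow, mul_ite, mul_one, mul_zero]
  rw [Finset.sum_congr rfl hterm, ← Finset.sum_filter]
  -- RHS: drop the vanishing terms
  rw [show ∀ S : Finset (Fin j → ℕ), (∑ n ∈ S, multinomGen r n * ∏ k, Nat.fib (k.1+2) ^ n k)
      = ∑ n ∈ S.filter (fun n => ∑ k, n k ≤ r),
          (Nat.factorial r / ((∏ k, Nat.factorial (n k)) *
            Nat.factorial (r - ∑ k, n k))) * ∏ k, Nat.fib (k.1+2) ^ n k from
    fun S => by
      rw [Finset.sum_filter]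
      apply Finset.sum_congr rfl
      intro n _
      rw [multinomGen]
      split_ifs <;> simp]
  rw [Finset.filter_filter]
  -- the bijection
  refine Finset.sum_nbij'
    (i := fun m => fun k : Fin j => m (k.1 + 1))
    (j := fun n => fun i : ℕ => match i with
      | 0 => r - ∑ k, n k
      | (i+1) => if h : i < j then n ⟨i, h⟩ else 0) ?_ ?_ ?_ ?_ ?_
  · intro m hm
    rw [Finset.mem_filter, Finset.mem_piAntidiag] at hm
    obtain ⟨⟨hm1, hm2⟩, hm3⟩ := hm
    have hsum : ∑ k : Fin j, m (k.1 + 1) = ∑ k ∈ Finset.range j, m (k+1) :=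
      Fin.sum_univ_eq_sum_range (fun k => m (k+1)) j
    have hsplit : ∑ k ∈ Finset.range j, m (k+1) + m 0 = r := by
      rw [← Finset.sum_range_succ' m j, hm1]
    have hwt : ∑ k : Fin j, (k.1+1) * m (k.1 + 1) = j := by
      rw [Fin.sum_univ_eq_sum_range (fun k => (k+1) * m (k+1)) j]
      rw [Finset.sum_range_succ' (fun k => k * m k) j] at hm3
      simpa using hm3.symm
    simp only [Finset.mem_filter, Fintype.mem_piFinset]
    refine ⟨?_, hwt, ?_⟩
    · intro k
      rw [Finset.mem_range, Nat.lt_succ_iff]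
      calc m (k.1+1) ≤ (k.1+1) * m (k.1+1) := Nat.le_mul_of_pos_left _ (Nat.succ_pos _)
        _ ≤ ∑ k : Fin j, (k.1+1) * m (k.1 + 1) :=
            Finset.single_le_sum (f := fun k : Fin j => (k.1+1) * m (k.1+1))
              (fun _ _ => Nat.zero_le _) (Finset.mem_univ k)
        _ = j := hwt
    · rw [hsum]; omega
  · intro n hn
    rw [Finset.mem_filter, Fintype.mem_piFinset] at hn
    obtain ⟨hn1, hn2, hn3⟩ := hn
    set mm : ℕ → ℕ := fun i : ℕ => match i with
      | 0 => r - ∑ k, n k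
      | (i+1) => if h : i < j then n ⟨i, h⟩ else 0 with hmm
    have hsum : ∑ k ∈ Finset.range j, mm (k+1) = ∑ k : Fin j, n k := by
      rw [← Fin.sum_univ_eq_sum_range (fun k => mm (k+1)) j]
      apply Finset.sum_congr rfl
      intro k _
      simp [hmm, k.isLt]
    rw [Finset.mem_filter, Finset.mem_piAntidiag]
    refine ⟨⟨?_, ?_⟩, ?_⟩
    · show ∑ k ∈ Finset.range (j+1), mm k = r
      rw [Finset.sum_range_succ' mm j, hsum]
      show ∑ k : Fin j, n k + (r - ∑ k, n k) = r
      omega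
    · intro i hi
      have hi' : mm i ≠ 0 := hi
      match i with
      | 0 => simp
      | (i+1) =>
        rw [Finset.mem_range]
        by_contra hij
        have : ¬ i < j := by omega
        simp [hmm, this] at hi'
    · show j = ∑ k ∈ Finset.range (j+1), k * mm k
      rw [Finset.sum_range_succ' (fun k => k * mm k) j]
      have : ∑ k ∈ Finset.range j, (k+1) * mm (k+1) = ∑ k : Fin j, (k.1+1) * n k := by
        rw [← Fin.sum_univ_eq_sum_range (fun k => (k+1) * mm (k+1)) j]
        apply Finset.sum_congr rfl
        intro k _
        simp [hmm, k.isLt]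
      simp [this, hn2]
  · intro m hm
    rw [Finset.mem_filter, Finset.mem_piAntidiag] at hm
    obtain ⟨⟨hm1, hm2⟩, hm3⟩ := hm
    funext i
    match i with
    | 0 =>
      show r - ∑ k : Fin j, m (k.1+1) = m 0
      have hsum : ∑ k : Fin j, m (k.1 + 1) = ∑ k ∈ Finset.range j, m (k+1) :=
        Fin.sum_univ_eq_sum_range (fun k => m (k+1)) j
      have hsplit : ∑ k ∈ Finset.range j, m (k+1) + m 0 = r := by
        rw [← Finset.sum_range_succ' m j, hm1]
      omega
    | (i+1) =>
      by_cases h : i < j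
      · simp [h]
      · have : (i+1) ∉ Finset.range (j+1) := by
          rw [Finset.mem_range]; omega
        have := mt (hm2 (i+1)) this
        simp only [not_not] at this
        simp [h, this]
  · intro n hn
    funext k
    show (if h : k.1 < j then n ⟨k.1, h⟩ else 0) = n k
    simp [k.isLt]
  · intro m hm
    rw [Finset.mem_filter, Finset.mem_piAntidiag] at hm
    obtain ⟨⟨hm1, hm2⟩, hm3⟩ := hm
    have hsum : ∑ k : Fin j, m (k.1 + 1) = ∑ k ∈ Finset.range j, m (k+1) :=
      Fin.sum_univ_eq_sum_range (fun k => m (k+1)) j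
    have hsplit : ∑ k ∈ Finset.range j, m (k+1) + m 0 = r := by
      rw [← Finset.sum_range_succ' m j, hm1]
    have hm0 : m 0 = r - ∑ k : Fin j, m (k.1+1) := by omega
    congr 1
    · -- multinomial equality
      rw [Nat.multinomial, hm1, Finset.prod_range_succ' (fun k => (m k).factorial) j]
      congr 1
      rw [← Fin.prod_univ_eq_prod_range (fun k => (m (k+1)).factorial) j, hm0]
    · -- fib product equality
      rw [Finset.prod_range_succ' (fun k => Nat.fib (k+1) ^ m k) j,
        ← Fin.prod_univ_eq_prod_range (fun k => Nat.fib (k+1+1) ^ m (k+1)) j]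
      norm_num
end

section
/- Let r ≥ 1 be an integer, and let χ(x) = 1 if x is an integer and χ(x) = 0 otherwise. Then: H_1^{(r)} = 1 if r ≤ 2 and H_1^{(r)} = 0 if r ≥ 3; H_2^{(r)} = 1; 2·H_3^{(r)} = 3 + r − (−1)^{r/2}·χ(r/2); 6·H_4^{(r)} = 8 + 9r + r² − 2·χ(r/3); 24·H_5^{(r)} = 42 + 59r + 18r² + r³ − (18 + 3r)·(−1)^{r/2}·χ(r/2); and 120·H_6^{(r)} = 264 + 450r + 215r² + 30r³ + r⁴ − 24·χ(r/5). -/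
lemma convFib_zero_zero : convFib 0 0 = 1 := by simp [convFib]

lemma convFib_zero_succ (m : ℕ) : convFib 0 (m + 1) = 0 := by
  simp [convFib]

lemma convFib_right_zero (r : ℕ) : convFib r 0 = 1 := by
  simp [convFib, Finset.Nat.antidiagonalTuple_zero_right]

lemma convFib_succ (r m : ℕ) :
    convFib (r + 1) m = ∑ p ∈ Finset.HasAntidiagonal.antidiagonal m, Nat.fib (p.1 + 1) * convFib r p.2 := by
  classical
  rw [convFib]
  simp only [convFib, Finset.mul_sum]
  rw [Finset.sum_sigma']
  refine Finset.sum_bij' (fun x _ => ⟨(x 0, ∑ i : Fin r, x i.succ), Fin.tail x⟩)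
    (fun x _ => Fin.cons x.1.1 x.2) ?_ ?_ ?_ ?_ ?_
  · intro x hx
    rw [Finset.Nat.mem_antidiagonalTuple] at hx
    simp only [Finset.mem_sigma, Finset.HasAntidiagonal.mem_antidiagonal, Finset.Nat.mem_antidiagonalTuple]
    refine ⟨by rw [← hx, Fin.sum_univ_succ], ?_⟩
    simp [Fin.tail]
  · intro x hx
    simp only [Finset.mem_sigma, Finset.HasAntidiagonal.mem_antidiagonal,
      Finset.Nat.mem_antidiagonalTuple] at hx
    rw [Finset.Nat.mem_antidiagonalTuple, Fin.sum_cons, hx.2, hx.1]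
  · intro x _
    exact Fin.cons_self_tail x
  · intro x hx
    simp only [Finset.mem_sigma, Finset.HasAntidiagonal.mem_antidiagonal,
      Finset.Nat.mem_antidiagonalTuple] at hx
    refine Sigma.ext ?_ ?_
    · simp only [Fin.cons_zero, Fin.cons_succ]
      rw [hx.2]
    · simp [Fin.tail_cons]
  · intro x _
    rw [Fin.prod_univ_succ]
    simp [Fin.cons_zero, Fin.cons_succ, Fin.tail]

lemma convFib_succ' (r m : ℕ) :
    convFib (r + 1) m = ∑ k ∈ Finset.range (m + 1), Nat.fib (k + 1) * convFib r (m - k) := by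
  rw [convFib_succ, Finset.Nat.sum_antidiagonal_eq_sum_range_succ_mk]

lemma convFib_one (r : ℕ) : (convFib r 1 : ℚ) = r := by
  induction r with
  | zero => simp [convFib_zero_succ]
  | succ n ih =>
    rw [convFib_succ']
    simp only [Finset.sum_range_succ, Finset.sum_range_zero]
    norm_num [convFib_right_zero]
    exact_mod_cast ih

lemma convFib_two (r : ℕ) : 2 * (convFib r 2 : ℚ) = r ^ 2 + 3 * r := by
  induction r with
  | zero => simp [convFib_zero_succ]
  | succ n ih =>
    rw [convFib_succ']
    simp only [Finset.sum_range_succ, Finset.sum_range_zero]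
    norm_num [convFib_right_zero]
    rw [convFib_one]
    linear_combination ih

lemma convFib_three (r : ℕ) : 6 * (convFib r 3 : ℚ) = r ^ 3 + 9 * r ^ 2 + 8 * r := by
  induction r with
  | zero => simp [convFib_zero_succ]
  | succ n ih =>
    rw [convFib_succ']
    simp only [Finset.sum_range_succ, Finset.sum_range_zero]
    norm_num [convFib_right_zero]
    push_cast
    rw [convFib_one]
    linear_combination ih + 3 * convFib_two n

lemma convFib_four (r : ℕ) :
    24 * (convFib r 4 : ℚ) = r ^ 4 + 18 * r ^ 3 + 59 * r ^ 2 + 42 * r := by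
  induction r with
  | zero => simp [convFib_zero_succ]
  | succ n ih =>
    rw [convFib_succ']
    simp only [Finset.sum_range_succ, Finset.sum_range_zero]
    norm_num [convFib_right_zero]
    push_cast
    rw [convFib_one]
    linear_combination ih + 4 * convFib_three n + 24 * convFib_two n

lemma convFib_five (r : ℕ) :
    120 * (convFib r 5 : ℚ) =
      r ^ 5 + 30 * r ^ 4 + 215 * r ^ 3 + 450 * r ^ 2 + 264 * r := by
  induction r with
  | zero => simp [convFib_zero_succ]
  | succ n ih =>
    rw [convFib_succ']
    simp only [Finset.sum_range_succ, Finset.sum_range_zero]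
    norm_num [convFib_right_zero]
    push_cast
    rw [convFib_one]
    linear_combination ih + 5 * convFib_four n + 40 * convFib_three n + 180 * convFib_two n

open ArithmeticFunction in
lemma moebius_sum_neg_one_pow (n : ℕ) (hn : 0 < n) :
    ∑ d ∈ n.divisors, ((moebius d : ℤ) : ℚ) * (-1 : ℚ) ^ (n / d) =
      (if n = 1 then -1 else if n = 2 then 2 else 0) := by
  have key := (sum_eq_iff_sum_mul_moebius_eq
    (R := ℚ)
    (f := fun d => (if d = 1 then (-1 : ℚ) else 0) + (if d = 2 then (2 : ℚ) else 0))
    (g := fun n => (-1 : ℚ) ^ n)).mp ?_ n hn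
  · rw [← Nat.sum_divisorsAntidiagonal (fun i j => ((moebius i : ℤ) : ℚ) * (-1 : ℚ) ^ j)]
    push_cast at key ⊢
    rw [key]
    rcases eq_or_ne n 1 with h | h
    · simp [h]
    rcases eq_or_ne n 2 with h2 | h2 <;> simp [h, h2]
  · intro m hm
    rw [Finset.sum_add_distrib, Finset.sum_ite_eq' m.divisors 1 (fun _ => (-1 : ℚ)),
      Finset.sum_ite_eq' m.divisors 2 (fun _ => (2 : ℚ))]
    rw [if_pos (Nat.one_mem_divisors.mpr hm.ne')]
    rcases Nat.even_or_odd m with h | h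
    · rw [if_pos (Nat.mem_divisors.mpr ⟨h.two_dvd, hm.ne'⟩), h.neg_one_pow]
      norm_num
    · rw [if_neg (fun hc => (Nat.not_even_iff_odd.mpr h)
        (even_iff_two_dvd.mpr (Nat.mem_divisors.mp hc).1)), h.neg_one_pow]
      norm_num

open ArithmeticFunction

lemma mu1 : ((moebius 1 : ℤ) : ℚ) = 1 := by simp
lemma mu2 : ((moebius 2 : ℤ) : ℚ) = -1 := by
  rw [moebius_apply_prime Nat.prime_two]; norm_num
lemma mu3 : ((moebius 3 : ℤ) : ℚ) = -1 := by
  rw [moebius_apply_prime Nat.prime_three]; norm_num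
lemma mu4 : ((moebius 4 : ℤ) : ℚ) = 0 := by
  rw [moebius_eq_zero_of_not_squarefree (by decide)]; norm_num
lemma mu5 : ((moebius 5 : ℤ) : ℚ) = -1 := by
  rw [moebius_apply_prime (by norm_num)]; norm_num

lemma div2 : Nat.divisors 2 = {1, 2} := by decide
lemma div3 : Nat.divisors 3 = {1, 3} := by decide
lemma div4 : Nat.divisors 4 = {1, 2, 4} := by decide
lemma div5 : Nat.divisors 5 = {1, 5} := by decide

lemma gcd_prime_not_dvd {p r : ℕ} (hp : p.Prime) (h : ¬ p ∣ r) : Nat.gcd r p = 1 := by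
  rcases (Nat.dvd_prime hp).mp (Nat.gcd_dvd_right r p) with h1 | h1
  · exact h1
  · exact absurd (h1 ▸ Nat.gcd_dvd_left r p) h

lemma gcd_dvd_left_eq {p r : ℕ} (h : p ∣ r) : Nat.gcd r p = p := by
  rw [Nat.gcd_comm]; exact Nat.gcd_eq_left h

lemma Hfib_zero (r : ℕ) (hr : 1 ≤ r) : Hfib r 0 = if r ≤ 2 then 1 else 0 := by
  rw [Hfib, Nat.gcd_zero_right]
  rw [Finset.sum_congr rfl (fun d hd => by
    rw [Nat.zero_div, convFib_right_zero, Nat.cast_one, mul_one])]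
  rw [moebius_sum_neg_one_pow r hr]
  rcases eq_or_ne r 1 with h | h
  · subst h; norm_num
  rcases eq_or_ne r 2 with h2 | h2
  · subst h2; norm_num
  · rw [if_neg h, if_neg h2, if_neg (by omega)]
    ring

lemma Hfib_one (r : ℕ) (hr : 1 ≤ r) : Hfib r 1 = 1 := by
  have hr0 : (r : ℚ) ≠ 0 := Nat.cast_ne_zero.mpr (by omega)
  rw [Hfib, Nat.gcd_one_right, Nat.divisors_one, Finset.sum_singleton, mu1, Nat.div_one,
    Nat.div_one, convFib_one]
  have hs : (-1 : ℚ) ^ r * (-1 : ℚ) ^ r = 1 := by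
    rw [← pow_add]; exact Even.neg_one_pow ⟨r, by ring⟩
  field_simp
  linear_combination hs

lemma Hfib_two (r : ℕ) (hr : 1 ≤ r) :
    2 * Hfib r 2 = 3 + (r : ℚ) - (if 2 ∣ r then (-1 : ℚ) ^ (r / 2) else 0) := by
  by_cases h2 : 2 ∣ r
  · obtain ⟨k, rfl⟩ := h2
    have hk : (k : ℚ) ≠ 0 := Nat.cast_ne_zero.mpr (by omega)
    have e1 : 2 * k / 2 = k := Nat.mul_div_cancel_left k (by norm_num)
    have hpow : (-1 : ℚ) ^ (2 * k) = 1 := by rw [pow_mul]; norm_num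
    rw [Hfib, gcd_dvd_left_eq ⟨k, rfl⟩, div2, Finset.sum_insert (by decide),
      Finset.sum_singleton, mu1, mu2, Nat.div_one, Nat.div_one, e1, hpow,
      if_pos ⟨k, rfl⟩, convFib_one]
    push_cast
    field_simp
    linear_combination (norm := (push_cast; ring_nf)) (1 / 2 : ℚ) * convFib_two (2 * k)
  · have hr0 : (r : ℚ) ≠ 0 := Nat.cast_ne_zero.mpr (by omega)
    have hs : (-1 : ℚ) ^ r * (-1 : ℚ) ^ r = 1 := by
      rw [← pow_add]; exact Even.neg_one_pow ⟨r, by ring⟩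
    rw [Hfib, gcd_prime_not_dvd Nat.prime_two h2, Nat.divisors_one, Finset.sum_singleton,
      mu1, Nat.div_one, Nat.div_one, if_neg h2]
    field_simp
    linear_combination 2 * (convFib r 2 : ℚ) * hs + convFib_two r

lemma Hfib_three (r : ℕ) (hr : 1 ≤ r) :
    6 * Hfib r 3 = 8 + 9 * (r : ℚ) + (r : ℚ) ^ 2 - 2 * (if 3 ∣ r then (1 : ℚ) else 0) := by
  by_cases h3 : 3 ∣ r
  · obtain ⟨k, rfl⟩ := h3
    have hk : (k : ℚ) ≠ 0 := Nat.cast_ne_zero.mpr (by omega)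
    have e1 : 3 * k / 3 = k := Nat.mul_div_cancel_left k (by norm_num)
    have hpow : (-1 : ℚ) ^ (3 * k) = (-1 : ℚ) ^ k := by
      rw [pow_mul]; norm_num
    have hs : (-1 : ℚ) ^ k * (-1 : ℚ) ^ k = 1 := by
      rw [← pow_add]; exact Even.neg_one_pow ⟨k, by ring⟩
    rw [Hfib, gcd_dvd_left_eq ⟨k, rfl⟩, div3, Finset.sum_insert (by decide),
      Finset.sum_singleton, mu1, mu3, Nat.div_one, Nat.div_one, e1, hpow,
      if_pos ⟨k, rfl⟩, convFib_one]
    field_simp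
    linear_combination (norm := (push_cast; ring_nf))
      (6 * (convFib (3 * k) 3 : ℚ) - 6 * k) * hs + convFib_three (3 * k)
  · have hr0 : (r : ℚ) ≠ 0 := Nat.cast_ne_zero.mpr (by omega)
    have hs : (-1 : ℚ) ^ r * (-1 : ℚ) ^ r = 1 := by
      rw [← pow_add]; exact Even.neg_one_pow ⟨r, by ring⟩
    rw [Hfib, gcd_prime_not_dvd Nat.prime_three h3, Nat.divisors_one, Finset.sum_singleton,
      mu1, Nat.div_one, Nat.div_one, if_neg h3]
    field_simp
    linear_combination (norm := (push_cast; ring_nf))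
      6 * (convFib r 3 : ℚ) * hs + convFib_three r

lemma Hfib_five (r : ℕ) (hr : 1 ≤ r) :
    120 * Hfib r 5 = 264 + 450 * (r : ℚ) + 215 * (r : ℚ) ^ 2 + 30 * (r : ℚ) ^ 3 +
      (r : ℚ) ^ 4 - 24 * (if 5 ∣ r then (1 : ℚ) else 0) := by
  by_cases h5 : 5 ∣ r
  · obtain ⟨k, rfl⟩ := h5
    have hk : (k : ℚ) ≠ 0 := Nat.cast_ne_zero.mpr (by omega)
    have e1 : 5 * k / 5 = k := Nat.mul_div_cancel_left k (by norm_num)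
    have hpow : (-1 : ℚ) ^ (5 * k) = (-1 : ℚ) ^ k := by
      rw [pow_mul]; norm_num
    have hs : (-1 : ℚ) ^ k * (-1 : ℚ) ^ k = 1 := by
      rw [← pow_add]; exact Even.neg_one_pow ⟨k, by ring⟩
    rw [Hfib, gcd_dvd_left_eq ⟨k, rfl⟩, div5, Finset.sum_insert (by decide),
      Finset.sum_singleton, mu1, mu5, Nat.div_one, Nat.div_one, e1, hpow,
      if_pos ⟨k, rfl⟩, convFib_one]
    field_simp
    linear_combination (norm := (push_cast; ring_nf))
      (120 * (convFib (5 * k) 5 : ℚ) - 120 * k) * hs + convFib_five (5 * k)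
  · have hr0 : (r : ℚ) ≠ 0 := Nat.cast_ne_zero.mpr (by omega)
    have hs : (-1 : ℚ) ^ r * (-1 : ℚ) ^ r = 1 := by
      rw [← pow_add]; exact Even.neg_one_pow ⟨r, by ring⟩
    rw [Hfib, gcd_prime_not_dvd (by norm_num) h5, Nat.divisors_one, Finset.sum_singleton,
      mu1, Nat.div_one, Nat.div_one, if_neg h5]
    field_simp
    linear_combination (norm := (push_cast; ring_nf))
      120 * (convFib r 5 : ℚ) * hs + convFib_five r

lemma Hfib_four (r : ℕ) (hr : 1 ≤ r) :
    24 * Hfib r 4 = 42 + 59 * (r : ℚ) + 18 * (r : ℚ) ^ 2 + (r : ℚ) ^ 3 -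
      (18 + 3 * (r : ℚ)) * (if 2 ∣ r then (-1 : ℚ) ^ (r / 2) else 0) := by
  by_cases h2 : 2 ∣ r
  · obtain ⟨k, rfl⟩ := h2
    have hk : (k : ℚ) ≠ 0 := Nat.cast_ne_zero.mpr (by omega)
    have e1 : 2 * k / 2 = k := Nat.mul_div_cancel_left k (by norm_num)
    have hpow : (-1 : ℚ) ^ (2 * k) = 1 := by rw [pow_mul]; norm_num
    by_cases h4 : 4 ∣ 2 * k
    · have hg : Nat.gcd (2 * k) 4 = 4 := gcd_dvd_left_eq h4
      rw [Hfib, hg, div4, Finset.sum_insert (by decide), Finset.sum_insert (by decide),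
        Finset.sum_singleton, mu1, mu2, mu4, zero_mul, zero_mul, Nat.div_one, Nat.div_one,
        e1, hpow, if_pos ⟨k, rfl⟩, show (4 : ℕ) / 2 = 2 from rfl]
      field_simp
      linear_combination (norm := (push_cast; ring_nf))
        convFib_four (2 * k) - 12 * (-1 : ℚ) ^ k * convFib_two k
    · have hk2 : ¬ 2 ∣ k := fun ⟨j, hj⟩ => h4 ⟨j, by omega⟩
      have hg : Nat.gcd (2 * k) 4 = 2 := by
        rw [show (4 : ℕ) = 2 * 2 from rfl, Nat.gcd_mul_left,
          gcd_prime_not_dvd Nat.prime_two hk2]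
      rw [Hfib, hg, div2, Finset.sum_insert (by decide),
        Finset.sum_singleton, mu1, mu2, Nat.div_one, Nat.div_one,
        e1, hpow, if_pos ⟨k, rfl⟩, show (4 : ℕ) / 2 = 2 from rfl]
      field_simp
      linear_combination (norm := (push_cast; ring_nf))
        convFib_four (2 * k) - 12 * (-1 : ℚ) ^ k * convFib_two k
  · have hr0 : (r : ℚ) ≠ 0 := Nat.cast_ne_zero.mpr (by omega)
    have hs : (-1 : ℚ) ^ r * (-1 : ℚ) ^ r = 1 := by
      rw [← pow_add]; exact Even.neg_one_pow ⟨r, by ring⟩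
    have hg : Nat.gcd r 4 = 1 := by
      have h : Nat.Coprime r 2 := gcd_prime_not_dvd Nat.prime_two h2
      simpa using h.pow_right 2
    rw [Hfib, hg, Nat.divisors_one, Finset.sum_singleton,
      mu1, Nat.div_one, Nat.div_one, if_neg h2]
    field_simp
    linear_combination (norm := (push_cast; ring_nf))
      24 * (convFib r 4 : ℚ) * hs + convFib_four r

/-- Theorem (twee): explicit formulas for `H_{j+1}^{(r)} = Hfib r j` for small `j`,
where `χ(r/2)`, `χ(r/3)`, `χ(r/5)` are replaced by the conditions `2 ∣ r`, `3 ∣ r`,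
`5 ∣ r` respectively. -/
theorem Hfib_low_degree_formulas (r : ℕ) (hr : 1 ≤ r) :
    (r ≤ 2 → Hfib r 0 = 1) ∧ (3 ≤ r → Hfib r 0 = 0) ∧
    Hfib r 1 = 1 ∧
    2 * Hfib r 2 = 3 + (r : ℚ) - (if 2 ∣ r then (-1 : ℚ) ^ (r / 2) else 0) ∧
    6 * Hfib r 3 = 8 + 9 * (r : ℚ) + (r : ℚ) ^ 2 - 2 * (if 3 ∣ r then (1 : ℚ) else 0) ∧
    24 * Hfib r 4 = 42 + 59 * (r : ℚ) + 18 * (r : ℚ) ^ 2 + (r : ℚ) ^ 3 -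
      (18 + 3 * (r : ℚ)) * (if 2 ∣ r then (-1 : ℚ) ^ (r / 2) else 0) ∧
    120 * Hfib r 5 = 264 + 450 * (r : ℚ) + 215 * (r : ℚ) ^ 2 + 30 * (r : ℚ) ^ 3 +
      (r : ℚ) ^ 4 - 24 * (if 5 ∣ r then (1 : ℚ) else 0) := by
  refine ⟨fun h => ?_, fun h => ?_, Hfib_one r hr, Hfib_two r hr, Hfib_three r hr,
    Hfib_four r hr, Hfib_five r hr⟩
  · rw [Hfib_zero r hr, if_pos h]
  · rw [Hfib_zero r hr, if_neg (by omega)]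
end
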